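/- Let (X,d) be a pseudometric space and D > 0 with d(x,y) ≤ D for all x,y ∈ X. Let ε > 0, set δ = εD/2 and z = ⌈2/ε⌉. Let k ≥ 1, h ≥ 1, and s₀,…,s_{k−1} ∈ X. For v ∈ X let X̂_v = {(i,j) : i ∈ ℤ, 1 ≤ i ≤ k−1, j ∈ ℤ, −z ≤ j ≤ z, d(v,s_i) − d(v,s₀) ≤ j·δ}, a subset of the finite ground set Ω = {1,…,k−1} × {−z,…,z}. Assume that no h-element subset of Ω is shattered by the family F = {X̂_v : v ∈ X}, i.e., for every Y ⊆ Ω with |Y| = h there exists Z ⊆ Y such that Z ≠ A ∩ Y for all A ∈ F. Then every subset U ⊆ X admits a subset U' ⊆ U with |U'| ≤ (z+1) · Σ_{i=0}^{h−1} C((k−1)(2z+1), i) (where C(m,i) is the binomial coefficient) such that for every u ∈ U there is u' ∈ U' with |d(u,s_i) − d(u',s_i)| ≤ εD for all 0 ≤ i ≤ k−1. -/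

import Mathlib

/-- Existence of an `(εD)`-additive core-set of size
`(z+1)·Σ_{i<h} C((k−1)(2z+1), i)`, assuming the family `{X̂_v}` has
VC dimension at most `h − 1` on the ground set `Ω`. -/
theorem stmt2 {X : Type*} [PseudoMetricSpace X] (D : ℝ) (hD : 0 < D)
    (hbdd : ∀ x y : X, dist x y ≤ D) (ε : ℝ) (hε : 0 < ε)
    (k h : ℕ) (hk : 1 ≤ k) (hh : 1 ≤ h) (s : Fin k → X)
    (Xhat : X → Set (Fin k × ℤ))
    (hXhat : ∀ v : X, Xhat v =
      {p : Fin k × ℤ | 1 ≤ (p.1 : ℕ) ∧ -(⌈2 / ε⌉₊ : ℤ) ≤ p.2 ∧ p.2 ≤ (⌈2 / ε⌉₊ : ℤ) ∧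
        dist v (s p.1) - dist v (s ⟨0, hk⟩) ≤ (p.2 : ℝ) * (ε * D / 2)})
    (Ω : Set (Fin k × ℤ))
    (hΩ : Ω = {p : Fin k × ℤ | 1 ≤ (p.1 : ℕ) ∧ -(⌈2 / ε⌉₊ : ℤ) ≤ p.2 ∧ p.2 ≤ (⌈2 / ε⌉₊ : ℤ)})
    (hVC : ∀ Y : Set (Fin k × ℤ), Y ⊆ Ω → Y.ncard = h →
      ∃ Z ⊆ Y, ∀ v : X, Z ≠ Xhat v ∩ Y) :
    ∀ U : Set X, ∃ U' ⊆ U, U'.Finite ∧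
      U'.ncard ≤ (⌈2 / ε⌉₊ + 1) *
        ∑ i ∈ Finset.range h, ((k - 1) * (2 * ⌈2 / ε⌉₊ + 1)).choose i ∧
      ∀ u ∈ U, ∃ u' ∈ U', ∀ i : Fin k, |dist u (s i) - dist u' (s i)| ≤ ε * D := by
  classical
  intro U
  rcases U.eq_empty_or_nonempty with rfl | ⟨u₀, hu₀⟩
  · exact ⟨∅, Set.Subset.rfl, Set.finite_empty, by simp, by simp⟩
  set z : ℕ := ⌈2 / ε⌉₊ with hz
  set δ : ℝ := ε * D / 2 with hδdef
  have hδ : 0 < δ := by positivity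
  have hzδ : D ≤ (z : ℝ) * δ := by
    have h1 : 2 / ε ≤ (z : ℝ) := Nat.le_ceil _
    have h2 : (2 / ε) * δ ≤ (z : ℝ) * δ := by nlinarith
    have h3 : (2 / ε) * δ = D := by
      rw [hδdef]; field_simp
    linarith
  set s0 : X := s ⟨0, hk⟩ with hs0
  set Ωf : Finset (Fin k × ℤ) :=
    (Finset.univ.filter fun i : Fin k => 1 ≤ (i : ℕ)) ×ˢ Finset.Icc (-(z : ℤ)) z with hΩf
  have hmemΩf : ∀ p : Fin k × ℤ,
      p ∈ Ωf ↔ 1 ≤ (p.1 : ℕ) ∧ -(z : ℤ) ≤ p.2 ∧ p.2 ≤ (z : ℤ) := by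
    intro p
    simp [hΩf, Finset.mem_product, Finset.mem_Icc, and_assoc]
  set A : X → Finset (Fin k × ℤ) := fun v => Ωf.filter (fun p => p ∈ Xhat v) with hA
  -- key one-sided comparison
  have key : ∀ (i : Fin k), 1 ≤ (i : ℕ) → ∀ u u' : X, A u = A u' →
      dist u (s i) - dist u s0 ≤ (dist u' (s i) - dist u' s0) + δ := by
    intro i hi u u' hAe
    by_contra hcon
    push_neg at hcon
    set a : ℝ := dist u' (s i) - dist u' s0 with ha
    set j : ℤ := ⌈a / δ⌉ with hj
    have hj1 : a ≤ (j : ℝ) * δ := by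
      have := Int.le_ceil (a / δ)
      rw [div_le_iff₀ hδ] at this
      exact this
    have hj2 : (j : ℝ) * δ < a + δ := by
      have h' : (j : ℝ) < a / δ + 1 := by rw [hj]; exact Int.ceil_lt_add_one _
      have h'' := mul_lt_mul_of_pos_right h' hδ
      rw [add_mul, div_mul_cancel₀ _ (ne_of_gt hδ), one_mul] at h''
      exact h''
    have haD : a ≤ D := by
      have := hbdd u' (s i)
      have := dist_nonneg (x := u') (y := s0)
      simp only [ha]; linarith
    have haD' : -D ≤ a := by
      have := hbdd u' s0
      have := dist_nonneg (x := u') (y := s i)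
      simp only [ha]; linarith
    have hjz : j ≤ (z : ℤ) := by
      have hDu : dist u (s i) ≤ D := hbdd u (s i)
      have h0u : 0 ≤ dist u s0 := dist_nonneg
      have : (j : ℝ) * δ < (z : ℝ) * δ := by linarith
      have : (j : ℝ) < (z : ℝ) := lt_of_mul_lt_mul_right this (le_of_lt hδ)
      exact_mod_cast le_of_lt this
    have hjz' : -(z : ℤ) ≤ j := by
      have h1 : -((z : ℝ)) ≤ a / δ := by
        rw [le_div_iff₀ hδ]
        nlinarith
      have h2 : (-(z : ℤ) : ℝ) ≤ (j : ℝ) := by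
        push_cast
        exact le_trans h1 (Int.le_ceil _)
      exact_mod_cast h2
    have hpX : (i, j) ∈ Xhat u' := by
      rw [hXhat u']
      exact ⟨hi, hjz', hjz, hj1⟩
    have hpΩ : (i, j) ∈ Ωf := (hmemΩf (i, j)).2 ⟨hi, hjz', hjz⟩
    have hpA : (i, j) ∈ A u := by
      rw [hAe, hA]
      exact Finset.mem_filter.2 ⟨hpΩ, hpX⟩
    have hpXu : (i, j) ∈ Xhat u := (Finset.mem_filter.1 hpA).2
    rw [hXhat u] at hpXu
    have := hpXu.2.2.2
    simp only [hs0] at *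
    linarith
  -- same class implies close
  have close : ∀ u u' : X, ⌊dist u s0 / δ⌋₊ = ⌊dist u' s0 / δ⌋₊ → A u = A u' →
      ∀ i : Fin k, |dist u (s i) - dist u' (s i)| ≤ ε * D := by
    intro u u' hb hAe i
    have h0 : |dist u s0 - dist u' s0| ≤ δ := by
      have h1 : (⌊dist u s0 / δ⌋₊ : ℝ) ≤ dist u s0 / δ :=
        Nat.floor_le (by positivity)
      have h2 : dist u s0 / δ < ⌊dist u s0 / δ⌋₊ + 1 := Nat.lt_floor_add_one _
      have h3 : (⌊dist u' s0 / δ⌋₊ : ℝ) ≤ dist u' s0 / δ :=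
        Nat.floor_le (by positivity)
      have h4 : dist u' s0 / δ < ⌊dist u' s0 / δ⌋₊ + 1 := Nat.lt_floor_add_one _
      rw [hb] at h1 h2
      have g1 := (le_div_iff₀ hδ).1 h1
      have g2 := (div_lt_iff₀ hδ).1 h2
      have g3 := (le_div_iff₀ hδ).1 h3
      have g4 := (div_lt_iff₀ hδ).1 h4
      rw [abs_le]
      constructor <;> nlinarith
    have hεD : ε * D = 2 * δ := by rw [hδdef]; ring
    by_cases hi : 1 ≤ (i : ℕ)
    · have k1 := key i hi u u' hAe
      have k2 := key i hi u' u hAe.symm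
      rw [abs_le] at h0 ⊢
      constructor <;> [linarith; linarith]
    · have hi0 : i = ⟨0, hk⟩ := by
        apply Fin.ext
        simpa using Nat.lt_one_iff.1 (Nat.lt_of_not_le hi)
      rw [hi0]
      rw [← hs0]
      rw [abs_le] at h0 ⊢
      constructor <;> [linarith; linarith]
  -- the finite family
  set F : Finset (Finset (Fin k × ℤ)) :=
    Ωf.powerset.filter (fun B => ∃ v : X, A v = B) with hF
  have hAmemF : ∀ v : X, A v ∈ F := fun v =>
    Finset.mem_filter.2 ⟨Finset.mem_powerset.2 (Finset.filter_subset _ _), v, rfl⟩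
  have hnoshatter : ∀ Y : Finset (Fin k × ℤ), Y.card = h → ¬ F.Shatters Y := by
    intro Y hYcard hsh
    have hYΩ : Y ⊆ Ωf := by
      obtain ⟨A', hA', hsub⟩ := hsh.exists_superset
      exact hsub.trans (Finset.mem_powerset.1 (Finset.mem_filter.1 hA').1)
    have hYΩ' : (Y : Set (Fin k × ℤ)) ⊆ Ω := by
      intro p hp
      rw [hΩ]
      exact (hmemΩf p).1 (hYΩ hp)
    obtain ⟨Z, hZY, hZ⟩ := hVC (Y : Set (Fin k × ℤ)) hYΩ'
      (by rw [Set.ncard_coe_finset]; exact hYcard)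
    set Zf : Finset (Fin k × ℤ) := Y.filter (fun p => p ∈ Z) with hZf
    obtain ⟨A', hA'F, hint⟩ := hsh (Finset.filter_subset (fun p => p ∈ Z) Y)
    obtain ⟨v, rfl⟩ := (Finset.mem_filter.1 hA'F).2
    apply hZ v
    ext p
    constructor
    · intro hp
      have hpY : p ∈ (Y : Set (Fin k × ℤ)) := hZY hp
      have hpZf : p ∈ Y.filter (fun q => q ∈ Z) := Finset.mem_filter.2 ⟨hpY, hp⟩
      rw [← hint] at hpZf
      have := (Finset.mem_filter.1 (Finset.mem_inter.1 hpZf).2).2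
      exact ⟨this, hpY⟩
    · rintro ⟨hpX, hpY⟩
      have hpY' : p ∈ Y := hpY
      have : p ∈ Y ∩ A v :=
        Finset.mem_inter.2 ⟨hpY', Finset.mem_filter.2 ⟨hYΩ hpY', hpX⟩⟩
      rw [hint] at this
      exact (Finset.mem_filter.1 this).2
  -- cardinality of the ground set
  have hΩcard : Ωf.card = (k - 1) * (2 * z + 1) := by
    rw [hΩf, Finset.card_product]
    have h1 : (Finset.univ.filter fun i : Fin k => 1 ≤ (i : ℕ)) =
        Finset.univ \ {(⟨0, hk⟩ : Fin k)} := by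
      ext i
      simp [Fin.ext_iff]
      omega
    have h2 : (Finset.univ.filter fun i : Fin k => 1 ≤ (i : ℕ)).card = k - 1 := by
      rw [h1, Finset.card_sdiff_of_subset (Finset.subset_univ _)]
      simp
    have h3 : (Finset.Icc (-(z : ℤ)) (z : ℤ)).card = 2 * z + 1 := by
      rw [Int.card_Icc]
      omega
    rw [h2, h3]
  -- Sauer–Shelah bound
  have hFcard : F.card ≤ ∑ i ∈ Finset.range h, ((k - 1) * (2 * z + 1)).choose i := by
    have h1 := Finset.card_le_card_shatterer F
    have h2 : F.shatterer ⊆ (Finset.range h).biUnion (fun i => Ωf.powersetCard i) := by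
      intro t ht
      rw [Finset.mem_shatterer] at ht
      have htΩ : t ⊆ Ωf := by
        obtain ⟨A', hA', hsub⟩ := ht.exists_superset
        exact hsub.trans (Finset.mem_powerset.1 (Finset.mem_filter.1 hA').1)
      have htcard : t.card < h := by
        by_contra hle
        push_neg at hle
        obtain ⟨Y, hYt, hYcard⟩ := Finset.exists_subset_card_eq hle
        exact hnoshatter Y hYcard (ht.mono_right hYt)
      exact Finset.mem_biUnion.2 ⟨t.card, Finset.mem_range.2 htcard,
        Finset.mem_powersetCard.2 ⟨htΩ, rfl⟩⟩
    have h3 : ((Finset.range h).biUnion fun i => Ωf.powersetCard i).card =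
        ∑ i ∈ Finset.range h, (Ωf.card.choose i) := by
      rw [Finset.card_biUnion]
      · simp [Finset.card_powersetCard]
      · intro i _ j _ hij
        rw [Function.onFun, Finset.disjoint_left]
        intro t hti htj
        exact hij ((Finset.mem_powersetCard.1 hti).2.symm.trans
          (Finset.mem_powersetCard.1 htj).2)
    calc F.card ≤ F.shatterer.card := h1
      _ ≤ ((Finset.range h).biUnion fun i => Ωf.powersetCard i).card :=
          Finset.card_le_card h2
      _ = ∑ i ∈ Finset.range h, (Ωf.card.choose i) := h3
      _ = ∑ i ∈ Finset.range h, ((k - 1) * (2 * z + 1)).choose i := by rw [hΩcard]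
  -- the classifying map
  set Φ : X → ℕ × Finset (Fin k × ℤ) := fun v => (⌊dist v s0 / δ⌋₊, A v) with hΦ
  set T : Finset (ℕ × Finset (Fin k × ℤ)) := (Finset.range (z + 1)) ×ˢ F with hT
  have hbucket : ∀ v : X, ⌊dist v s0 / δ⌋₊ ≤ z := by
    intro v
    have h1 : dist v s0 / δ ≤ (z : ℝ) := by
      rw [div_le_iff₀ hδ]
      calc dist v s0 ≤ D := hbdd v s0
        _ ≤ (z : ℝ) * δ := hzδ
    calc ⌊dist v s0 / δ⌋₊ ≤ ⌊(z : ℝ)⌋₊ := Nat.floor_le_floor h1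
      _ = z := Nat.floor_natCast z
  have hΦT : ∀ v : X, Φ v ∈ T :=
    fun v => Finset.mem_product.2
      ⟨Finset.mem_range.2 (Nat.lt_succ_of_le (hbucket v)), hAmemF v⟩
  have hfin : (Φ '' U).Finite :=
    Set.Finite.subset T.finite_toSet (by rintro _ ⟨v, _, rfl⟩; exact hΦT v)
  have hpick : ∀ t : ℕ × Finset (Fin k × ℤ), ∃ u : X, u ∈ U ∧ (t ∈ Φ '' U → Φ u = t) := by
    intro t
    by_cases ht : t ∈ Φ '' U
    · obtain ⟨v, hv, rfl⟩ := ht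
      exact ⟨v, hv, fun _ => rfl⟩
    · exact ⟨u₀, hu₀, fun c => absurd c ht⟩
  choose g hgU hgΦ using hpick
  refine ⟨↑(hfin.toFinset.image g), ?_, Finset.finite_toSet _, ?_, ?_⟩
  · rintro _ hx
    simp only [Finset.coe_image, Set.mem_image, Finset.mem_coe] at hx
    obtain ⟨t, _, rfl⟩ := hx
    exact hgU t
  · rw [Set.ncard_coe_finset]
    calc (hfin.toFinset.image g).card ≤ hfin.toFinset.card := Finset.card_image_le
      _ ≤ T.card := Finset.card_le_card (fun t ht => by
          obtain ⟨v, _, rfl⟩ := hfin.mem_toFinset.1 ht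
          exact hΦT v)
      _ = (z + 1) * F.card := by rw [hT, Finset.card_product, Finset.card_range]
      _ ≤ (z + 1) * ∑ i ∈ Finset.range h, ((k - 1) * (2 * z + 1)).choose i :=
          Nat.mul_le_mul_left _ hFcard
  · intro u hu
    have htmem : Φ u ∈ Φ '' U := ⟨u, hu, rfl⟩
    refine ⟨g (Φ u), ?_, ?_⟩
    · simp only [Finset.coe_image, Set.mem_image, Finset.mem_coe]
      exact ⟨Φ u, hfin.mem_toFinset.2 htmem, rfl⟩
    · have hΦeq : Φ (g (Φ u)) = Φ u := hgΦ (Φ u) htmem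
      have hb : ⌊dist u s0 / δ⌋₊ = ⌊dist (g (Φ u)) s0 / δ⌋₊ :=
        (congrArg Prod.fst hΦeq).symm
      have hAe : A u = A (g (Φ u)) := (congrArg Prod.snd hΦeq).symm
      exact close u (g (Φ u)) hb hAe
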